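/- Let X be a locally compact Hausdorff space, Y a Hausdorff space, and suppose X is a topological sum of X₁ and X₂. Then the space MU(X,Y) of minimal usco maps with the topology of uniform convergence on compact sets is homeomorphic to MU(X₁,Y) × MU(X₂,Y), via the map F ↦ (F↾X₁, F↾X₂). -/
import Mathlib


open TopologicalSpace Metric Set

noncomputable section

/-- `F` is usco: upper semicontinuous with nonempty compact values. -/
def IsUsco {X Y : Type*} [TopologicalSpace X] [TopologicalSpace Y] (F : X → Set Y) : Prop :=
  (∀ x, (F x).Nonempty) ∧ (∀ x, IsCompact (F x)) ∧
    ∀ x, ∀ V : Set Y, IsOpen V → F x ⊆ V →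
      ∃ U : Set X, IsOpen U ∧ x ∈ U ∧ ∀ x' ∈ U, F x' ⊆ V

/-- `F` is minimal usco: minimal w.r.t. inclusion (of graphs) among usco maps. -/
def IsMinimalUsco {X Y : Type*} [TopologicalSpace X] [TopologicalSpace Y] (F : X → Set Y) : Prop :=
  IsUsco F ∧ ∀ G : X → Set Y, IsUsco G → (∀ x, G x ⊆ F x) → G = F

/-- The space `MU(X,Y)` of minimal usco maps from `X` to `Y`, as a subspace of the space of all
maps `X → K(Y)` with the uniformity of uniform convergence on compact sets, where the hyperspace
`K(Y)` of nonempty compact subsets of `Y` carries the Hausdorff metric. -/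
def MU (X Y : Type*) [TopologicalSpace X] [MetricSpace Y] : Type _ :=
  {F : UniformOnFun X (NonemptyCompacts Y) {K : Set X | IsCompact K} //
    IsMinimalUsco (fun x => ((UniformOnFun.toFun {K : Set X | IsCompact K} F) x : Set Y))}

instance (X Y : Type*) [TopologicalSpace X] [MetricSpace Y] : UniformSpace (MU X Y) :=
  inferInstanceAs (UniformSpace
    {F : UniformOnFun X (NonemptyCompacts Y) {K : Set X | IsCompact K} //
      IsMinimalUsco (fun x => ((UniformOnFun.toFun {K : Set X | IsCompact K} F) x : Set Y))})

instance (X Y : Type*) [TopologicalSpace X] [MetricSpace Y] : TopologicalSpace (MU X Y) :=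
  (inferInstance : UniformSpace (MU X Y)).toTopologicalSpace

/-- The underlying multifunction of a minimal usco map. -/
def MU.toFun {X Y : Type*} [TopologicalSpace X] [MetricSpace Y] (F : MU X Y) : X → Set Y :=
  fun x => ((UniformOnFun.toFun {K : Set X | IsCompact K} F.val) x : Set Y)

/-- The value of a minimal usco map at a point, as a nonempty compact subset of `Y`. -/
def MU.val' {X Y : Type*} [TopologicalSpace X] [MetricSpace Y] (F : MU X Y) (x : X) :
    NonemptyCompacts Y :=
  UniformOnFun.toFun {K : Set X | IsCompact K} F.val x

/-- `D₂(X,Y)`: the minimal usco maps whose total image has at most two points. -/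
def D2 (X Y : Type*) [TopologicalSpace X] [MetricSpace Y] : Set (MU X Y) :=
  {F | (⋃ x, F.toFun x).encard ≤ 2}

/-- A space is locally σ-compact if every point has a σ-compact neighborhood. -/
def LocallySigmaCompact (Z : Type*) [TopologicalSpace Z] : Prop :=
  ∀ z : Z, ∃ s ∈ nhds z, IsSigmaCompact s

end

section Aux

variable {X Y : Type*} [TopologicalSpace X] [TopologicalSpace Y]

theorem isUsco_restrict {F : X → Set Y} (hF : IsUsco F) (A : Set X) :
    IsUsco (fun a : A => F ↑a) := by
  obtain ⟨h1, h2, h3⟩ := hF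
  refine ⟨fun a => h1 a, fun a => h2 a, fun a V hV hFV => ?_⟩
  obtain ⟨U, hUo, haU, hU⟩ := h3 ↑a V hV hFV
  exact ⟨Subtype.val ⁻¹' U, hUo.preimage continuous_subtype_val, haU,
    fun x hx => hU ↑x hx⟩

open Classical in
theorem isUsco_glue {A : Set X} (hA : IsClopen A) {F₁ : A → Set Y} {F₂ : ↥(Aᶜ) → Set Y}
    (h₁ : IsUsco F₁) (h₂ : IsUsco F₂) :
    IsUsco (fun x => if h : x ∈ A then F₁ ⟨x, h⟩ else F₂ ⟨x, h⟩) := by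
  refine ⟨fun x => ?_, fun x => ?_, fun x V hV hFV => ?_⟩
  · by_cases h : x ∈ A
    · simpa [dif_pos h] using h₁.1 ⟨x, h⟩
    · simpa [dif_neg h] using h₂.1 ⟨x, h⟩
  · by_cases h : x ∈ A
    · simpa [dif_pos h] using h₁.2.1 ⟨x, h⟩
    · simpa [dif_neg h] using h₂.2.1 ⟨x, h⟩
  · by_cases h : x ∈ A
    · simp only [dif_pos h] at hFV
      obtain ⟨U, hUo, haU, hU⟩ := h₁.2.2 ⟨x, h⟩ V hV hFV
      obtain ⟨W, hWo, hWU⟩ := isOpen_induced_iff.mp hUo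
      refine ⟨W ∩ A, hWo.inter hA.2, ⟨by rw [← hWU] at haU; exact haU, h⟩, fun x' hx' => ?_⟩
      simp only [dif_pos hx'.2]
      exact hU ⟨x', hx'.2⟩ (by rw [← hWU]; exact hx'.1)
    · simp only [dif_neg h] at hFV
      obtain ⟨U, hUo, haU, hU⟩ := h₂.2.2 ⟨x, h⟩ V hV hFV
      obtain ⟨W, hWo, hWU⟩ := isOpen_induced_iff.mp hUo
      refine ⟨W ∩ Aᶜ, hWo.inter hA.1.isOpen_compl, ⟨by rw [← hWU] at haU; exact haU, h⟩,
        fun x' hx' => ?_⟩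
      have hx2 : x' ∉ A := hx'.2
      simp only [dif_neg hx2]
      exact hU ⟨x', hx'.2⟩ (by rw [← hWU]; exact hx'.1)

open Classical in
theorem isMinimalUsco_restrict {A : Set X} (hA : IsClopen A) {F : X → Set Y}
    (hF : IsMinimalUsco F) : IsMinimalUsco (fun a : A => F ↑a) := by
  refine ⟨isUsco_restrict hF.1 A, fun G hG hGF => ?_⟩
  have hHusco : IsUsco (fun x => if h : x ∈ A then G ⟨x, h⟩ else
      (fun b : ↥(Aᶜ) => F ↑b) ⟨x, h⟩) := isUsco_glue hA hG (isUsco_restrict hF.1 Aᶜ)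
  have hHF : ∀ x, (if h : x ∈ A then G ⟨x, h⟩ else (fun b : ↥(Aᶜ) => F ↑b) ⟨x, h⟩) ⊆ F x := by
    intro x
    by_cases h : x ∈ A
    · rw [dif_pos h]; exact hGF ⟨x, h⟩
    · rw [dif_neg h]
  have hHeq := hF.2 _ hHusco hHF
  funext a
  have := congrFun hHeq ↑a
  rw [dif_pos a.2] at this
  simpa using this

open Classical in
theorem isMinimalUsco_glue {A : Set X} (hA : IsClopen A) {F₁ : A → Set Y} {F₂ : ↥(Aᶜ) → Set Y}
    (h₁ : IsMinimalUsco F₁) (h₂ : IsMinimalUsco F₂) :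
    IsMinimalUsco (fun x => if h : x ∈ A then F₁ ⟨x, h⟩ else F₂ ⟨x, h⟩) := by
  refine ⟨isUsco_glue hA h₁.1 h₂.1, fun G hG hGle => ?_⟩
  have e1 : (fun a : A => G ↑a) = F₁ := by
    refine h₁.2 _ (isUsco_restrict hG A) fun a => ?_
    have := hGle ↑a
    simp only [dif_pos a.2] at this
    simpa using this
  have e2 : (fun b : ↥(Aᶜ) => G ↑b) = F₂ := by
    refine h₂.2 _ (isUsco_restrict hG Aᶜ) fun b => ?_
    have hb : ↑b ∉ A := b.2
    have := hGle ↑b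
    simp only [dif_neg hb] at this
    simpa using this
  funext x
  by_cases h : x ∈ A
  · simp only [dif_pos h]
    exact congrFun e1 ⟨x, h⟩
  · simp only [dif_neg h]
    exact congrFun e2 ⟨x, h⟩

end Aux

section Main

open UniformOnFun Filter

variable {X Y : Type*} [TopologicalSpace X] [MetricSpace Y]

end Main

/-- If `X` is the topological sum of the clopen set `A` and its complement, then `MU(X,Y)` is
homeomorphic to `MU(A,Y) × MU(Aᶜ,Y)` via restriction. -/
theorem statement6 {X Y : Type*} [TopologicalSpace X] [T2Space X] [LocallyCompactSpace X]
    [MetricSpace Y] (A : Set X) (hA : IsClopen A) :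
    ∃ e : MU X Y ≃ₜ MU ↥A Y × MU ↥(Aᶜ) Y,
      ∀ F : MU X Y, (∀ x : ↥A, ((e F).1).toFun x = F.toFun ↑x) ∧
        (∀ x : ↥(Aᶜ), ((e F).2).toFun x = F.toFun ↑x) := by
  classical
  set β := NonemptyCompacts Y
  set 𝔖 : Set (Set X) := {K : Set X | IsCompact K} with h𝔖
  set 𝔗₁ : Set (Set ↥A) := {K : Set ↥A | IsCompact K} with h𝔗₁
  set 𝔗₂ : Set (Set ↥(Aᶜ)) := {K : Set ↥(Aᶜ) | IsCompact K} with h𝔗₂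
  -- the restriction maps at the level of MU
  have res₁ : ∀ F : MU X Y, IsMinimalUsco (fun a : A =>
      ((UniformOnFun.toFun 𝔗₁ (UniformOnFun.ofFun 𝔗₁
        (fun a : A => UniformOnFun.toFun 𝔖 F.val ↑a))) a : Set Y)) := fun F =>
    isMinimalUsco_restrict hA F.2
  have res₂ : ∀ F : MU X Y, IsMinimalUsco (fun b : ↥(Aᶜ) =>
      ((UniformOnFun.toFun 𝔗₂ (UniformOnFun.ofFun 𝔗₂
        (fun b : ↥(Aᶜ) => UniformOnFun.toFun 𝔖 F.val ↑b))) b : Set Y)) := fun F =>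
    isMinimalUsco_restrict (hA.compl) F.2
  -- the glued map
  have glue : ∀ (p : MU ↥A Y × MU ↥(Aᶜ) Y), IsMinimalUsco (fun x : X =>
      ((UniformOnFun.toFun 𝔖 (UniformOnFun.ofFun 𝔖 (fun x : X =>
        if h : x ∈ A then UniformOnFun.toFun 𝔗₁ p.1.val ⟨x, h⟩
        else UniformOnFun.toFun 𝔗₂ p.2.val ⟨x, h⟩))) x : Set Y)) := by
    intro p
    have := isMinimalUsco_glue hA p.1.2 p.2.2
    show IsMinimalUsco (fun x : X => (((if h : x ∈ A then UniformOnFun.toFun 𝔗₁ p.1.val ⟨x, h⟩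
      else UniformOnFun.toFun 𝔗₂ p.2.val ⟨x, h⟩) : β) : Set Y))
    convert this using 2 with x
    rw [apply_dite (fun s : NonemptyCompacts Y => (s : Set Y))]
  -- compactness bookkeeping for the covering lemma
  have himg₁ : Set.MapsTo (fun K => (Subtype.val : ↥A → X) '' K) 𝔗₁ 𝔖 :=
    fun K hK => hK.image continuous_subtype_val
  have himg₂ : Set.MapsTo (fun K => (Subtype.val : ↥(Aᶜ) → X) '' K) 𝔗₂ 𝔖 :=
    fun K hK => hK.image continuous_subtype_val
  have hpre₁ : Set.MapsTo (fun K => (Subtype.val : ↥A → X) ⁻¹' K) 𝔖 𝔗₁ := fun K hK =>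
    Topology.IsInducing.subtypeVal.isCompact_preimage
      (by rw [Subtype.range_coe]; exact hA.1) hK
  have hpre₂ : Set.MapsTo (fun K => (Subtype.val : ↥(Aᶜ) → X) ⁻¹' K) 𝔖 𝔗₂ := fun K hK =>
    Topology.IsInducing.subtypeVal.isCompact_preimage
      (by rw [Subtype.range_coe]; exact hA.compl.1) hK
  have hcov : ∀ S ∈ 𝔖, S ⊆ range (Subtype.val : ↥A → X) ∪ range (Subtype.val : ↥(Aᶜ) → X) := by
    intro S _
    rw [Subtype.range_coe, Subtype.range_coe, union_compl_self]
    exact subset_univ S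
  have key := UniformOnFun.uniformSpace_eq_inf_precomp_of_cover (β := β) 𝔖
    (Subtype.val : ↥A → X) (Subtype.val : ↥(Aᶜ) → X) 𝔗₁ 𝔗₂ himg₁ himg₂ hpre₁ hpre₂ hcov
  -- the pair of restriction maps on function spaces is uniformly inducing
  set Φ₁ : UniformOnFun X β 𝔖 → UniformOnFun ↥A β 𝔗₁ :=
    ⇑(UniformOnFun.ofFun 𝔗₁) ∘ (fun g => g ∘ (Subtype.val : ↥A → X)) ∘
      ⇑(UniformOnFun.toFun 𝔖) with hΦ₁
  set Φ₂ : UniformOnFun X β 𝔖 → UniformOnFun ↥(Aᶜ) β 𝔗₂ :=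
    ⇑(UniformOnFun.ofFun 𝔗₂) ∘ (fun g => g ∘ (Subtype.val : ↥(Aᶜ) → X)) ∘
      ⇑(UniformOnFun.toFun 𝔖) with hΦ₂
  have huni : uniformity (UniformOnFun X β 𝔖) =
      @uniformity _ ((UniformOnFun.uniformSpace ↥A β 𝔗₁).comap Φ₁) ⊓
      @uniformity _ ((UniformOnFun.uniformSpace ↥(Aᶜ) β 𝔗₂).comap Φ₂) := by
    rw [← inf_uniformity]
    exact congrArg (fun u : UniformSpace (UniformOnFun X β 𝔖) => @uniformity _ u) key
  have hΦ : IsUniformInducing (fun f : UniformOnFun X β 𝔖 => (Φ₁ f, Φ₂ f)) := by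
    constructor
    rw [uniformity_prod, Filter.comap_inf, Filter.comap_comap, Filter.comap_comap, huni,
      uniformity_comap, uniformity_comap]
    rfl
  -- the equivalence
  let E : MU X Y ≃ MU ↥A Y × MU ↥(Aᶜ) Y := by
    refine Equiv.mk
        (fun F => (⟨UniformOnFun.ofFun 𝔗₁ (fun a : A => UniformOnFun.toFun 𝔖 F.val ↑a), res₁ F⟩,
                   ⟨UniformOnFun.ofFun 𝔗₂ (fun b : ↥(Aᶜ) => UniformOnFun.toFun 𝔖 F.val ↑b),
                     res₂ F⟩))
        (fun p => ⟨UniformOnFun.ofFun 𝔖 (fun x : X =>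
            if h : x ∈ A then UniformOnFun.toFun 𝔗₁ p.1.val ⟨x, h⟩
            else UniformOnFun.toFun 𝔗₂ p.2.val ⟨x, h⟩), glue p⟩)
        ?_ ?_
    · intro F
      apply Subtype.ext
      funext x
      show (if h : x ∈ A then UniformOnFun.toFun 𝔖 F.val ↑(⟨x, h⟩ : A)
          else UniformOnFun.toFun 𝔖 F.val ↑(⟨x, h⟩ : ↥(Aᶜ))) = _
      split <;> rfl
    · intro p
      refine Prod.ext (Subtype.ext (funext fun a => ?_)) (Subtype.ext (funext fun b => ?_))
      · exact dif_pos a.2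
      · exact dif_neg b.2
  have hE : Topology.IsInducing E := by
    have h2 : Topology.IsInducing
        ((Prod.map (Subtype.val) (Subtype.val)) ∘ (E : MU X Y → MU ↥A Y × MU ↥(Aᶜ) Y)) :=
      hΦ.isInducing.comp Topology.IsInducing.subtypeVal
    exact (Topology.IsInducing.of_comp_iff
      (Topology.IsInducing.subtypeVal.prodMap Topology.IsInducing.subtypeVal)).mp h2
  exact ⟨E.toHomeomorphOfIsInducing hE, fun F => ⟨fun x => rfl, fun x => rfl⟩⟩
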